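/- Let A be an alternating Büchi automaton, ≼_F a reflexive and transitive forward simulation on A such that A is ≼_F-unambiguous, ≼_B a reflexive and transitive backward simulation on A parametrised by ≼_F, and ≼_M a mediated preorder induced by ≼_F and ≼_B. Then for every partial run T of A on a word w ∈ Σ^ω with an extension function ext, there exists a partial run U of A on w such that T ≼_ext U, i.e., root(T) ≼_B root(U) and for every branch ψ of U there is a branch π of T with π ≼_α ψ and ext(π) ≼_F leaf(ψ). -/

import Mathlib

/-- An alternating Büchi automaton over alphabet `σ` with states `Q`:
initial state `ι`, transition function `δ` (where `P ∈ δ q a` means `q →a P`),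
and accepting states `α`. -/
structure ABA (σ Q : Type*) where
  ι : Q
  δ : Q → σ → Set (Set Q)
  α : Set Q

variable {σ Q : Type*}

/-- The assumption `∅ ∉ δ(q, a)` for all `q, a`. -/
def ABA.NoEmpty (A : ABA σ Q) : Prop := ∀ q a, ∅ ∉ A.δ q a

/-- The set of successors of a path `π` in a tree `T ⊆ Q⁺`. -/
def succs (T : Set (List Q)) (π : List Q) : Set Q := {q | π ++ [q] ∈ T}

/-- A tree over `Q`: a set of nonempty finite words over `Q`, closed under nonempty
prefixes and containing exactly one word of length one (its root). -/
structure IsTree (T : Set (List Q)) : Prop where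
  not_nil : [] ∉ T
  prefix_closed : ∀ π ∈ T, ∀ ρ : List Q, ρ <+: π → ρ ≠ [] → ρ ∈ T
  root : ∃! q : Q, [q] ∈ T

/-- The last state of a path (`A.ι` as a dummy for the empty path). -/
def lastSt (A : ABA σ Q) (π : List Q) : Q := π.getLastD A.ι

/-- A partial run of `A` on `w`: a finite tree in which every path either has no
successors or takes a transition of `A` on the appropriate letter of `w`. -/
structure IsPartialRun (A : ABA σ Q) (w : ℕ → σ) (T : Set (List Q)) : Prop where
  tree : IsTree T
  finite : T.Finite
  step : ∀ π ∈ T, succs T π = ∅ ∨ succs T π ∈ A.δ (lastSt A π) (w (π.length - 1))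

/-- A run of `A` on `w`. -/
structure IsRun (A : ABA σ Q) (w : ℕ → σ) (T : Set (List Q)) : Prop where
  tree : IsTree T
  step : ∀ π ∈ T, succs T π ∈ A.δ (lastSt A π) (w (π.length - 1))

/-- A (finite, maximal) branch of a tree. -/
def IsBranch (T : Set (List Q)) (π : List Q) : Prop := π ∈ T ∧ succs T π = ∅

/-- An infinite branch of a tree: all its nonempty finite prefixes belong to the tree. -/
def InfBranch (T : Set (List Q)) (ξ : ℕ → Q) : Prop :=
  ∀ n : ℕ, (List.ofFn fun i : Fin (n + 1) => ξ i) ∈ T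

/-- A run is accepting iff every infinite branch contains infinitely many accepting
states. -/
def Accepting (A : ABA σ Q) (T : Set (List Q)) : Prop :=
  ∀ ξ : ℕ → Q, InfBranch T ξ → ∀ n : ℕ, ∃ m ≥ n, ξ m ∈ A.α

/-- The language of `A`: the infinite words having an accepting run rooted at `ι`. -/
def ABA.Lang (A : ABA σ Q) : Set (ℕ → σ) :=
  {w | ∃ T : Set (List Q), IsRun A w T ∧ [A.ι] ∈ T ∧ Accepting A T}

/-- `p ≼_α r` : `p ∈ α ⇒ r ∈ α`. -/
def αle (A : ABA σ Q) (p r : Q) : Prop := p ∈ A.α → r ∈ A.α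

/-- A forward simulation on `A`. -/
def ForwardSim (A : ABA σ Q) (F : Q → Q → Prop) : Prop :=
  ∀ p r, F p r → (p ∈ A.α → r ∈ A.α) ∧
    ∀ a P, P ∈ A.δ p a → ∃ R ∈ A.δ r a, ∀ r' ∈ R, ∃ p' ∈ P, F p' r'

/-- A backward simulation on `A` parametrised by the forward simulation `F`. -/
def BackwardSim (A : ABA σ Q) (F B : Q → Q → Prop) : Prop :=
  ∀ p r, B p r → (p = A.ι → r = A.ι) ∧ (p ∈ A.α → r ∈ A.α) ∧
    ∀ a q P, p ∉ P → insert p P ∈ A.δ q a →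
      ∃ s R, r ∉ R ∧ insert r R ∈ A.δ s a ∧ B q s ∧ ∀ y ∈ R, ∃ x ∈ P, F x y

/-- `A` is `≼_F`-unambiguous: no transition has two distinct forward-equivalent states
on its right-hand side. -/
def Unambiguous (A : ABA σ Q) (F : Q → Q → Prop) : Prop :=
  ∀ p a P, P ∈ A.δ p a → ∀ q ∈ P, ∀ r ∈ P, q ≠ r → ¬ (F q r ∧ F r q)

/-- `M` is a mediated preorder induced by the forward simulation `F` and the backward
simulation `B`: a preorder containing `F`, contained in `F ∘ B⁻¹` (existence of a
mediator), and forward extensible. -/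
structure IsMediated (F B M : Q → Q → Prop) : Prop where
  refl : Reflexive M
  trans : Transitive M
  le_f : ∀ q r, F q r → M q r
  mediator : ∀ q r, M q r → ∃ s, F q s ∧ B r s
  fwd_ext : ∀ q r s, M q r → F r s → M q s

/-- An extension function for the partial run `T`: it assigns to every branch `π` of `T`
a state `ext π ≼_M leaf(π)`. -/
def IsExtFun (A : ABA σ Q) (M : Q → Q → Prop) (T : Set (List Q))
    (ext : List Q → Q) : Prop :=
  ∀ π, IsBranch T π → M (ext π) (lastSt A π)

/-- `π ≼_ext ψ` : `ψ` strongly covers `π` w.r.t. `ext`. -/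
def BrExt (A : ABA σ Q) (F : Q → Q → Prop) (ext : List Q → Q) (π ψ : List Q) : Prop :=
  List.Forall₂ (αle A) π ψ ∧ F (ext π) (lastSt A ψ)

/-- `π ≼_w-ext ψ` : `ψ` weakly covers `π` w.r.t. `ext`. -/
def BrWExt (A : ABA σ Q) (M : Q → Q → Prop) (ext : List Q → Q) (π ψ : List Q) : Prop :=
  List.Forall₂ (αle A) π ψ ∧ M (ext π) (lastSt A ψ)

/-- `T ≼_ext U` : `U` strongly covers `T` w.r.t. `ext` (every branch of `U` strongly
covers some branch of `T`, and the root of `U` backward simulates the root of `T`). -/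
def TrExt (A : ABA σ Q) (F B : Q → Q → Prop) (ext : List Q → Q)
    (T U : Set (List Q)) : Prop :=
  (∀ ψ, IsBranch U ψ → ∃ π, IsBranch T π ∧ BrExt A F ext π ψ) ∧
  ∀ p r, [p] ∈ T → [r] ∈ U → B p r

/-- `T ≼_w-ext U` : `U` weakly covers `T` w.r.t. `ext`. -/
def TrWExt (A : ABA σ Q) (M B : Q → Q → Prop) (ext : List Q → Q)
    (T U : Set (List Q)) : Prop :=
  (∀ ψ, IsBranch U ψ → ∃ π, IsBranch T π ∧ BrWExt A M ext π ψ) ∧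
  ∀ p r, [p] ∈ T → [r] ∈ U → B p r

/-- `sw_T(V)` : the tree of all nonempty prefixes of the strict weakly covering branches
of `V` w.r.t. `T` and `ext` (branches of `V` strongly covering no branch of `T`). -/
def swT (A : ABA σ Q) (F : Q → Q → Prop) (ext : List Q → Q)
    (T V : Set (List Q)) : Set (List Q) :=
  {ρ | ρ ≠ [] ∧ ∃ ψ, IsBranch V ψ ∧ (¬ ∃ π, IsBranch T π ∧ BrExt A F ext π ψ) ∧ ρ <+: ψ}

/- ### Auxiliary development for the proof -/

namespace Stmt13Aux

variable {σ Q : Type*}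

/-- The word shifted by one letter. -/
def shiftw (v : ℕ → σ) : ℕ → σ := fun n => v (n + 1)

lemma lastSt_singleton (A : ABA σ Q) (p : Q) : lastSt A [p] = p := rfl

lemma lastSt_cons (A : ABA σ Q) (c : Q) {l : List Q} (hl : l ≠ []) :
    lastSt A (c :: l) = lastSt A l := by
  cases l with
  | nil => exact absurd rfl hl
  | cons a t => simp [lastSt, List.getLastD_cons]

lemma mem_succs {T : Set (List Q)} {π : List Q} {q : Q} :
    q ∈ succs T π ↔ π ++ [q] ∈ T := Iff.rfl

lemma tree_ne_nil {T : Set (List Q)} (hT : IsTree T) {l : List Q} (hl : l ∈ T) :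
    l ≠ [] := by rintro rfl; exact hT.not_nil hl

/-- Every element of a tree with root `p` starts with `p`. -/
lemma tree_head {T : Set (List Q)} (hT : IsTree T) {p : Q} (hp : [p] ∈ T)
    {l : List Q} (hl : l ∈ T) : ∃ l', l = p :: l' := by
  obtain ⟨r, hr, hru⟩ := hT.root
  cases l with
  | nil => exact absurd hl hT.not_nil
  | cons a t =>
      refine ⟨t, ?_⟩
      have ha : [a] ∈ T := hT.prefix_closed _ hl [a] ⟨t, rfl⟩ (by simp)
      have : a = r := hru a ha
      have hp' : p = r := hru p hp
      rw [this, hp']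

lemma forall₂_lastSt (A : ABA σ Q) {R : Q → Q → Prop} :
    ∀ {l₁ l₂ : List Q}, List.Forall₂ R l₁ l₂ → l₁ ≠ [] →
      R (lastSt A l₁) (lastSt A l₂) := by
  intro l₁ l₂ h
  induction h with
  | nil => intro h; exact absurd rfl h
  | @cons a b l₁' l₂' hab htail ih =>
      intro _
      cases l₁' with
      | nil => cases htail; exact hab
      | cons x xs =>
          have h2 : l₂' ≠ [] := by rintro rfl; cases htail
          rw [lastSt_cons _ _ (by simp), lastSt_cons _ _ h2]
          exact ih (by simp)

lemma forall₂_comp {R S U' : Q → Q → Prop}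
    (h : ∀ a b c, R a b → S b c → U' a c) :
    ∀ {l₁ l₂ l₃ : List Q}, List.Forall₂ R l₁ l₂ → List.Forall₂ S l₂ l₃ →
      List.Forall₂ U' l₁ l₃ := by
  intro l₁ l₂ l₃ h12
  induction h12 generalizing l₃ with
  | nil => intro h23; cases h23; constructor
  | cons hab _ ih =>
      intro h23
      cases h23 with
      | cons hbc h' => exact List.Forall₂.cons (h _ _ _ hab hbc) (ih h')

/-- The subtree of `T` under the child `q` of the root `p`. -/
def childT (p q : Q) (T : Set (List Q)) : Set (List Q) :=
  {l | (∃ l', l = q :: l') ∧ p :: l ∈ T}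

lemma succs_childT {T : Set (List Q)} {p q : Q} {l : List Q}
    (hl : ∃ l', l = q :: l') :
    succs (childT p q T) l = succs T (p :: l) := by
  obtain ⟨l', rfl⟩ := hl
  ext q'
  simp only [mem_succs, childT, Set.mem_setOf_eq, List.cons_append]
  constructor
  · rintro ⟨-, h⟩; exact h
  · intro h; exact ⟨⟨l' ++ [q'], by simp⟩, h⟩

lemma childT_branch {T : Set (List Q)} {p q : Q} {l : List Q}
    (h : IsBranch (childT p q T) l) : IsBranch T (p :: l) :=
  ⟨h.1.2, by rw [← succs_childT h.1.1]; exact h.2⟩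

lemma childT_run {A : ABA σ Q} {v : ℕ → σ} {T : Set (List Q)}
    (hT : IsPartialRun A v T) {p q : Q} (hp : [p] ∈ T) (hq : q ∈ succs T [p]) :
    IsPartialRun A (shiftw v) (childT p q T) ∧ [q] ∈ childT p q T := by
  have hm : [q] ∈ childT p q T := ⟨⟨[], rfl⟩, hq⟩
  refine ⟨⟨⟨?_, ?_, ?_⟩, ?_, ?_⟩, hm⟩
  · rintro ⟨⟨l', h⟩, -⟩; cases h
  · rintro π ⟨⟨l', rfl⟩, hmem⟩ ρ hpre hne
    obtain ⟨t, ht⟩ := hpre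
    cases ρ with
    | nil => exact absurd rfl hne
    | cons a ρ' =>
        have ha : a = q := by
          have := congrArg (fun l => l.head?) ht
          simpa using this
        subst ha
        refine ⟨⟨ρ', rfl⟩, ?_⟩
        exact hT.tree.prefix_closed _ hmem _ ⟨t, by rw [← ht]; simp⟩ (by simp)
  · exact ⟨q, hm, by rintro y ⟨⟨l', h⟩, -⟩; injection h⟩
  · have himg : (List.cons p) '' childT p q T ⊆ T := by
      rintro _ ⟨l, hl, rfl⟩; exact hl.2
    have hinj : Function.Injective (List.cons p) := by
      intro a b h; injection h
    exact Set.Finite.of_finite_image (hT.finite.subset himg) hinj.injOn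
  · rintro π hπ
    have hs := succs_childT (T := T) (p := p) hπ.1
    obtain ⟨l', rfl⟩ := hπ.1
    rcases hT.step (p :: q :: l') hπ.2 with h | h
    · left; rw [hs]; exact h
    · right
      rw [hs]
      have hl : lastSt A (p :: q :: l') = lastSt A (q :: l') :=
        lastSt_cons _ _ (by simp)
      rw [hl] at h
      have : shiftw v ((q :: l').length - 1) = v ((p :: q :: l').length - 1) := by
        simp [shiftw]
      rw [this]
      exact h

lemma childT_ncard_lt {T : Set (List Q)} (hfin : T.Finite) {p q : Q}
    (hp : [p] ∈ T) : (childT p q T).ncard < T.ncard := by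
  have hinj : Function.Injective (List.cons p) := by intro a b h; injection h
  have himg : (List.cons p) '' childT p q T ⊆ T := by
    rintro _ ⟨l, hl, rfl⟩; exact hl.2
  have hss : (List.cons p) '' childT p q T ⊂ T := by
    refine ⟨himg, fun habs => ?_⟩
    obtain ⟨l, hl, hEq⟩ := habs hp
    obtain ⟨l', rfl⟩ := hl.1
    simp at hEq
  calc (childT p q T).ncard = ((List.cons p) '' childT p q T).ncard :=
        (Set.ncard_image_of_injective _ hinj).symm
    _ < T.ncard := Set.ncard_lt_ncard hss hfin

lemma singleton_run (A : ABA σ Q) (v : ℕ → σ) (s : Q) :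
    IsPartialRun A v {[s]} ∧ IsBranch {[s]} [s] ∧
      ∀ ψ, IsBranch ({[s]} : Set (List Q)) ψ → ψ = [s] := by
  have hsuc : succs {[s]} [s] = ∅ := by
    ext q
    simp only [succs, Set.mem_setOf_eq, Set.mem_singleton_iff, Set.mem_empty_iff_false,
      iff_false]
    intro h
    have := congrArg List.length h
    simp at this
  refine ⟨⟨⟨?_, ?_, ?_⟩, Set.finite_singleton _, ?_⟩, ⟨rfl, hsuc⟩, ?_⟩
  · intro h; simp at h
  · rintro π rfl ρ hpre hne
    obtain ⟨t, ht⟩ := hpre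
    cases ρ with
    | nil => exact absurd rfl hne
    | cons a ρ' =>
        simp only [List.cons_append, List.cons.injEq] at ht
        obtain ⟨rfl, h2⟩ := ht
        have : ρ' = [] := by
          cases ρ' with
          | nil => rfl
          | cons b t' => simp at h2
        simp [this]
  · exact ⟨s, rfl, fun y hy => by simpa using hy⟩
  · rintro π rfl
    left; exact hsuc
  · rintro ψ ⟨h, -⟩; exact h

/-- Assembling a tree from a root state `c`, a transition `D ∈ δ(c, v 0)` and a family
of partial runs on the shifted word, one rooted at each element of `D`. -/
lemma assemble [Finite Q] (A : ABA σ Q) (hne : A.NoEmpty) (v : ℕ → σ) (c : Q) (D : Set Q)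
    (hD : D ∈ A.δ c (v 0)) (G : Q → Set (List Q))
    (hG : ∀ e ∈ D, IsPartialRun A (shiftw v) (G e) ∧ [e] ∈ G e) :
    ∃ U, IsPartialRun A v U ∧ [c] ∈ U ∧
      ∀ ψ, IsBranch U ψ → ∃ e ∈ D, ∃ l, ψ = c :: l ∧ IsBranch (G e) l := by
  classical
  set U : Set (List Q) := {[c]} ∪ ⋃ e ∈ D, (List.cons c) '' (G e) with hU
  have hmemU : ∀ ψ, ψ ∈ U ↔ ψ = [c] ∨ ∃ e ∈ D, ∃ l ∈ G e, ψ = c :: l := by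
    intro ψ
    simp only [hU, Set.mem_union, Set.mem_singleton_iff, Set.mem_iUnion, Set.mem_image]
    constructor
    · rintro (h | ⟨e, he, l, hl, rfl⟩)
      · exact Or.inl h
      · exact Or.inr ⟨e, he, l, hl, rfl⟩
    · rintro (h | ⟨e, he, l, hl, rfl⟩)
      · exact Or.inl h
      · exact Or.inr ⟨e, he, l, hl, rfl⟩
  have hhead : ∀ e ∈ D, ∀ l ∈ G e, ∃ l', l = e :: l' := fun e he l hl =>
    tree_head (hG e he).1.tree (hG e he).2 hl
  have hcU : [c] ∈ U := (hmemU [c]).2 (Or.inl rfl)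
  have hsucc_root : succs U [c] = D := by
    ext q
    rw [mem_succs]
    have : ([c] ++ [q] : List Q) = c :: [q] := rfl
    rw [this, hmemU]
    constructor
    · rintro (h | ⟨e, he, l, hl, hEq⟩)
      · simp at h
      · have : l = [q] := by injection hEq with h1 h2; exact h2.symm
        subst this
        obtain ⟨l', hl'⟩ := hhead e he [q] hl
        have : q = e := by injection hl'
        subst this; exact he
    · intro hq
      exact Or.inr ⟨q, hq, [q], (hG q hq).2, rfl⟩
  have hDne : D ≠ ∅ := by rintro rfl; exact hne c (v 0) hD
  have hsucc_node : ∀ e ∈ D, ∀ l ∈ G e, succs U (c :: l) = succs (G e) l := by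
    intro e he l hl
    obtain ⟨l₀, rfl⟩ := hhead e he l hl
    ext q
    rw [mem_succs, mem_succs]
    have : (c :: (e :: l₀)) ++ [q] = c :: ((e :: l₀) ++ [q]) := rfl
    rw [this, hmemU]
    constructor
    · rintro (h | ⟨e', he', l', hl', hEq⟩)
      · simp at h
      · have hll : l' = (e :: l₀) ++ [q] := by injection hEq with h1 h2; exact h2.symm
        subst hll
        obtain ⟨l'', hl''⟩ := hhead e' he' _ hl'
        have : e = e' := by injection hl''
        subst this
        exact hl'
    · intro h
      exact Or.inr ⟨e, he, (e :: l₀) ++ [q], h, rfl⟩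
  refine ⟨U, ⟨⟨?_, ?_, ?_⟩, ?_, ?_⟩, hcU, ?_⟩
  · intro h
    rcases (hmemU []).1 h with h | ⟨e, he, l, hl, h⟩
    · simp at h
    · simp at h
  · intro π hπ ρ hpre hρne
    rcases (hmemU π).1 hπ with rfl | ⟨e, he, l, hl, rfl⟩
    · obtain ⟨t, ht⟩ := hpre
      cases ρ with
      | nil => exact absurd rfl hρne
      | cons a ρ' =>
          simp only [List.cons_append, List.cons.injEq] at ht
          obtain ⟨rfl, h2⟩ := ht
          have : ρ' = [] := by
            cases ρ' with
            | nil => rfl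
            | cons b t' => simp at h2
          subst this; exact hcU
    · obtain ⟨t, ht⟩ := hpre
      cases ρ with
      | nil => exact absurd rfl hρne
      | cons a ρ' =>
          simp only [List.cons_append, List.cons.injEq] at ht
          obtain ⟨rfl, h2⟩ := ht
          cases ρ' with
          | nil => exact hcU
          | cons b t' =>
              refine (hmemU _).2 (Or.inr ⟨e, he, b :: t', ?_, rfl⟩)
              exact (hG e he).1.tree.prefix_closed _ hl _ ⟨t, h2⟩ (by simp)
  · refine ⟨c, hcU, fun y hy => ?_⟩
    rcases (hmemU [y]).1 hy with h | ⟨e, he, l, hl, hEq⟩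
    · injection h
    · have := congrArg List.length hEq
      have hlne : l ≠ [] := tree_ne_nil (hG e he).1.tree hl
      simp at this
      exact absurd this hlne
  · have : U = {[c]} ∪ ⋃ e ∈ D, (List.cons c) '' (G e) := hU
    rw [this]
    refine (Set.finite_singleton _).union (Set.Finite.biUnion (Set.toFinite D) ?_)
    intro e he
    exact ((hG e he).1.finite).image _
  · intro π hπ
    rcases (hmemU π).1 hπ with rfl | ⟨e, he, l, hl, rfl⟩
    · right
      rw [hsucc_root]
      simpa [lastSt] using hD
    · rcases (hG e he).1.step l hl with h | h
      · left; rw [hsucc_node e he l hl]; exact h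
      · right
        rw [hsucc_node e he l hl]
        have hlne : l ≠ [] := tree_ne_nil (hG e he).1.tree hl
        rw [lastSt_cons _ _ hlne]
        have : v ((c :: l).length - 1) = shiftw v (l.length - 1) := by
          cases l with
          | nil => exact absurd rfl hlne
          | cons a t => simp [shiftw]
        rw [this]
        exact h
  · intro ψ hψ
    rcases (hmemU ψ).1 hψ.1 with rfl | ⟨e, he, l, hl, rfl⟩
    · exfalso
      have := hψ.2
      rw [hsucc_root] at this
      exact hDne this
    · exact ⟨e, he, l, rfl, hl, by rw [← hsucc_node e he l hl]; exact hψ.2⟩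
/-- Lifting a partial run along the forward simulation: from `F g y` and a partial run
rooted at `g` we get a partial run rooted at `y` whose branches pointwise `F`-cover
branches of the original. -/
lemma lift [Finite Q] (A : ABA σ Q) (hne : A.NoEmpty) (F : Q → Q → Prop)
    (hF : ForwardSim A F) :
    ∀ n : ℕ, ∀ (v : ℕ → σ) (G : Set (List Q)) (g y : Q),
      IsPartialRun A v G → [g] ∈ G → G.ncard ≤ n → F g y →
      ∃ G', IsPartialRun A v G' ∧ [y] ∈ G' ∧
        ∀ ψ, IsBranch G' ψ → ∃ η, IsBranch G η ∧ List.Forall₂ F η ψ := by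
  intro n
  induction n with
  | zero =>
      intro v G g y hG hg hcard _
      exfalso
      have : 0 < G.ncard := (Set.ncard_pos hG.finite).2 ⟨_, hg⟩
      omega
  | succ n IH =>
      intro v G g y hG hg hcard hgy
      rcases hG.step [g] hg with h0 | htr
      · -- the root is a leaf
        obtain ⟨hrun, hbr, hψ⟩ := singleton_run A v y
        refine ⟨{[y]}, hrun, rfl, ?_⟩
        intro ψ hψ'
        rw [hψ _ hψ']
        exact ⟨[g], ⟨hg, h0⟩, List.Forall₂.cons hgy List.Forall₂.nil⟩
      · classical
        have hδ : succs G [g] ∈ A.δ g (v 0) := by simpa [lastSt] using htr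
        obtain ⟨R, hR, hcov⟩ := (hF g y hgy).2 (v 0) _ hδ
        -- choose for each r' ∈ R a child q(r') of g with F (q r') r'
        have hpick : ∀ r' : Q, ∃ q, r' ∈ R → q ∈ succs G [g] ∧ F q r' := by
          intro r'
          by_cases h : r' ∈ R
          · obtain ⟨q, hq, hqF⟩ := hcov r' h
            exact ⟨q, fun _ => ⟨hq, hqF⟩⟩
          · exact ⟨g, fun hr => absurd hr h⟩
        choose pick hpicks using hpick
        -- for each r' ∈ R, lift the child subtree
        have hsub : ∀ r' : Q, ∃ G', r' ∈ R →
            IsPartialRun A (shiftw v) G' ∧ [r'] ∈ G' ∧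
            ∀ ψ, IsBranch G' ψ →
              ∃ η, IsBranch (childT g (pick r') G) η ∧ List.Forall₂ F η ψ := by
          intro r'
          by_cases h : r' ∈ R
          · obtain ⟨hqmem, hqF⟩ := hpicks r' h
            obtain ⟨hcrun, hcmem⟩ := childT_run hG hg hqmem
            have hlt : (childT g (pick r') G).ncard < G.ncard :=
              childT_ncard_lt hG.finite hg
            obtain ⟨G', h1, h2, h3⟩ :=
              IH (shiftw v) (childT g (pick r') G) (pick r') r' hcrun hcmem
                (by omega) hqF
            exact ⟨G', fun _ => ⟨h1, h2, h3⟩⟩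
          · exact ⟨∅, fun hr => absurd hr h⟩
        choose fam hfam using hsub
        obtain ⟨U, hUrun, hUmem, hUbr⟩ := assemble A hne v y R hR fam
          (fun e he => ⟨(hfam e he).1, (hfam e he).2.1⟩)
        refine ⟨U, hUrun, hUmem, ?_⟩
        intro ψ hψ
        obtain ⟨e, he, l, rfl, hlbr⟩ := hUbr ψ hψ
        obtain ⟨η, hηbr, hηF⟩ := (hfam e he).2.2 l hlbr
        exact ⟨(g :: η), childT_branch hηbr, List.Forall₂.cons hgy hηF⟩
open Classical in
/-- The number of states `F`-above `e`. -/
noncomputable def uF [Fintype Q] (F : Q → Q → Prop) (e : Q) : ℕ :=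
  (Finset.univ.filter fun b => F e b).card

open Classical in
lemma uF_pos [Fintype Q] {F : Q → Q → Prop} (hFr : Reflexive F) (e : Q) :
    1 ≤ uF F e :=
  Finset.card_pos.2 ⟨e, Finset.mem_filter.2 ⟨Finset.mem_univ _, hFr e⟩⟩

open Classical in
lemma uF_le [Fintype Q] {F : Q → Q → Prop} (hFt : Transitive F) {a b : Q}
    (h : F a b) : uF F b ≤ uF F a := by
  refine Finset.card_le_card ?_
  intro x hx
  rw [Finset.mem_filter] at hx ⊢
  exact ⟨hx.1, hFt h hx.2⟩

open Classical in
lemma uF_eq_rev [Fintype Q] {F : Q → Q → Prop} (hFr : Reflexive F)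
    (hFt : Transitive F) {a b : Q} (h : F a b) (he : uF F b = uF F a) : F b a := by
  have hsub : (Finset.univ.filter fun x => F b x) ⊆ (Finset.univ.filter fun x => F a x) := by
    intro x hx
    rw [Finset.mem_filter] at hx ⊢
    exact ⟨hx.1, hFt h hx.2⟩
  have : (Finset.univ.filter fun x => F b x) = (Finset.univ.filter fun x => F a x) :=
    Finset.eq_of_subset_of_card_le hsub (le_of_eq he.symm)
  have ha : a ∈ (Finset.univ.filter fun x => F a x) :=
    Finset.mem_filter.2 ⟨Finset.mem_univ _, hFr a⟩
  rw [← this] at ha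
  exact (Finset.mem_filter.1 ha).2

open Classical in
/-- The termination measure for the inner loop. -/
noncomputable def muF [Fintype Q] (F : Q → Q → Prop) (Good : Q → Prop)
    (D : Finset Q) : ℕ :=
  ∑ e ∈ D.filter (fun e => ¬ Good e), (Fintype.card Q + 1) ^ uF F e

open Classical in
lemma muF_lower [Fintype Q] (F : Q → Q → Prop) (Good : Q → Prop) {D : Finset Q}
    {e : Q} (he : e ∈ D) (hbad : ¬ Good e) :
    (Fintype.card Q + 1) ^ uF F e ≤ muF F Good D := by
  unfold muF
  exact Finset.single_le_sum (f := fun e => (Fintype.card Q + 1) ^ uF F e)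
    (fun i _ => Nat.zero_le _) (Finset.mem_filter.2 ⟨he, hbad⟩)

/-- The inner loop: repairing a transition until all of its target states carry
strongly covering subtrees. -/
lemma inner [Fintype Q] (A : ABA σ Q) (F B : Q → Q → Prop)
    (hFr : Reflexive F) (hFt : Transitive F) (hunamb : Unambiguous A F)
    (hBt : Transitive B) (hB : BackwardSim A F B) (a0 : σ)
    (Good : Q → Prop) (P : Set Q) (y : Q)
    (hhandle : ∀ e, (∃ x ∈ P, F x e) → ∃ z, B e z ∧ Good z)
    (hlift : ∀ x' y', Good x' → F x' y' → Good y') :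
    ∀ m : ℕ, ∀ (c : Q) (D : Finset Q), B y c → (↑D : Set Q) ∈ A.δ c a0 →
      (∀ e ∈ D, Good e ∨ ∃ x ∈ P, F x e) →
      muF F Good D ≤ m →
      ∃ (c' : Q) (D' : Finset Q), B y c' ∧ (↑D' : Set Q) ∈ A.δ c' a0 ∧ ∀ e ∈ D', Good e := by
  classical
  set W : ℕ := Fintype.card Q + 1 with hW
  intro m
  induction m with
  | zero =>
      intro c D hBc hD hst hμ
      refine ⟨c, D, hBc, hD, fun e he => ?_⟩
      by_contra hbad
      have hlow := muF_lower F Good he hbad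
      rw [← hW] at hlow
      have hpow : 0 < W ^ uF F e := pow_pos (by omega) _
      omega
  | succ m ihm =>
      intro c D hBc hD hst hμ
      by_cases hempty : D.filter (fun e => ¬ Good e) = ∅
      · refine ⟨c, D, hBc, hD, fun e he => ?_⟩
        by_contra hbad
        have : e ∈ D.filter (fun e => ¬ Good e) := Finset.mem_filter.2 ⟨he, hbad⟩
        rw [hempty] at this
        simp at this
      · -- pick an unhandled element of maximal `uF`
        obtain ⟨estar, hestar, hmax⟩ :=
          (D.filter (fun e => ¬ Good e)).exists_max_image (fun e => uF F e)
            (Finset.nonempty_of_ne_empty hempty)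
        obtain ⟨heD, hbad⟩ := Finset.mem_filter.1 hestar
        obtain ⟨x0, hx0P, hFx0⟩ := (hst estar heD).resolve_left hbad
        obtain ⟨z, hBez, hGz⟩ := hhandle estar ⟨x0, hx0P, hFx0⟩
        -- backward simulation step
        have hDeq : insert estar ((↑D : Set Q) \ {estar}) = ↑D := by
          rw [Set.insert_diff_singleton]
          exact Set.insert_eq_self.2 (Finset.mem_coe.2 heD)
        obtain ⟨s', R, hzR, hins, hBcs, hRcov⟩ :=
          (hB estar z hBez).2.2 a0 c ((↑D : Set Q) \ {estar}) (by simp)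
            (by rw [hDeq]; exact hD)
        have hRfin : R.Finite := Set.toFinite R
        set Rf : Finset Q := hRfin.toFinset with hRf
        have hRfcoe : (↑Rf : Set Q) = R := hRfin.coe_toFinset
        set Dnew : Finset Q := insert z Rf with hDnew
        have hDnewcoe : (↑Dnew : Set Q) = insert z R := by
          rw [hDnew]; push_cast [hRfcoe]; rfl
        have hDnewδ : (↑Dnew : Set Q) ∈ A.δ s' a0 := by rw [hDnewcoe]; exact hins
        -- statuses of the new children
        have hstnew : ∀ e ∈ Dnew, Good e ∨ ∃ x ∈ P, F x e := by
          intro e he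
          rcases Finset.mem_insert.1 he with rfl | heR
          · exact Or.inl hGz
          · have heR' : e ∈ R := by rw [← hRfcoe]; exact_mod_cast heR
            obtain ⟨x', hx'mem, hFx'⟩ := hRcov e heR'
            obtain ⟨hx'D, -⟩ := hx'mem
            rcases hst x' (Finset.mem_coe.1 hx'D) with hGx' | ⟨x, hxP, hFxx'⟩
            · exact Or.inl (hlift x' e hGx' hFx')
            · exact Or.inr ⟨x, hxP, hFt hFxx' hFx'⟩
        -- the measure strictly decreases
        have hdec : muF F Good Dnew < muF F Good D := by
          -- source function for strictly weak new children
          have hpick : ∀ e : Q, ∃ x', (e ∈ Rf ∧ ¬ Good e) →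
              (x' ∈ D ∧ ¬ Good x') ∧ x' ≠ estar ∧ F x' e := by
            intro e
            by_cases he : e ∈ Rf ∧ ¬ Good e
            · have heR' : e ∈ R := by rw [← hRfcoe]; exact_mod_cast he.1
              obtain ⟨x', hx'mem, hFx'⟩ := hRcov e heR'
              obtain ⟨hx'D, hx'ne⟩ := hx'mem
              have hGx' : ¬ Good x' := fun hg => he.2 (hlift x' e hg hFx')
              refine ⟨x', fun _ => ⟨⟨Finset.mem_coe.1 hx'D, hGx'⟩, ?_, hFx'⟩⟩
              simpa using hx'ne
            · exact ⟨estar, fun h => absurd h he⟩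
          choose g hg using hpick
          set S : Finset Q := Rf.filter (fun e => ¬ Good e) with hS
          have hgS : ∀ e ∈ S, (g e ∈ D ∧ ¬ Good (g e)) ∧ g e ≠ estar ∧ F (g e) e := by
            intro e he
            obtain ⟨h1, h2⟩ := Finset.mem_filter.1 he
            exact hg e ⟨h1, h2⟩
          have hsub1 : Dnew.filter (fun e => ¬ Good e) ⊆ S := by
            intro e he
            obtain ⟨h1, h2⟩ := Finset.mem_filter.1 he
            rcases Finset.mem_insert.1 h1 with rfl | heR
            · exact absurd hGz h2
            · exact Finset.mem_filter.2 ⟨heR, h2⟩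
          have hstep1 : muF F Good Dnew ≤ ∑ e ∈ S, W ^ uF F e :=
            Finset.sum_le_sum_of_subset hsub1
          -- split S by whether the measure stays the same
          set S1 : Finset Q := S.filter (fun e => uF F e = uF F (g e)) with hS1
          set S2 : Finset Q := S.filter (fun e => ¬ uF F e = uF F (g e)) with hS2
          have hsplit : ∑ e ∈ S1, W ^ uF F e + ∑ e ∈ S2, W ^ uF F e
              = ∑ e ∈ S, W ^ uF F e :=
            Finset.sum_filter_add_sum_filter_not S _ _
          -- S1 : g is injective there, by unambiguity
          have hinj : ∀ e₁ ∈ S1, ∀ e₂ ∈ S1, g e₁ = g e₂ → e₁ = e₂ := by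
            intro e₁ he₁ e₂ he₂ hgeq
            by_contra hne12
            have hS1a := Finset.mem_filter.1 he₁
            have hS1b := Finset.mem_filter.1 he₂
            have hga := hgS e₁ hS1a.1
            have hgb := hgS e₂ hS1b.1
            have hrev1 : F e₁ (g e₁) := uF_eq_rev hFr hFt hga.2.2 hS1a.2
            have hrev2 : F e₂ (g e₂) := uF_eq_rev hFr hFt hgb.2.2 hS1b.2
            have h12 : F e₁ e₂ := hFt hrev1 (by rw [hgeq]; exact hgb.2.2)
            have h21 : F e₂ e₁ := by
              rw [← hgeq] at hrev2
              exact hFt hrev2 hga.2.2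
            have hmem1 : e₁ ∈ insert z R := Set.mem_insert_iff.2 (Or.inr (by
              rw [← hRfcoe]
              exact_mod_cast (Finset.mem_filter.1 hS1a.1).1))
            have hmem2 : e₂ ∈ insert z R := Set.mem_insert_iff.2 (Or.inr (by
              rw [← hRfcoe]
              exact_mod_cast (Finset.mem_filter.1 hS1b.1).1))
            exact hunamb s' a0 _ hins e₁ hmem1 e₂ hmem2 hne12 ⟨h12, h21⟩
          have hsum1 : ∑ e ∈ S1, W ^ uF F e
              ≤ ∑ x ∈ (D.filter (fun e => ¬ Good e)).erase estar, W ^ uF F x := by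
            have h1 : ∑ e ∈ S1, W ^ uF F e = ∑ e ∈ S1, W ^ uF F (g e) :=
              Finset.sum_congr rfl (fun e he => by rw [(Finset.mem_filter.1 he).2])
            have h2 : ∑ x ∈ S1.image g, W ^ uF F x = ∑ e ∈ S1, W ^ uF F (g e) :=
              Finset.sum_image hinj
            have h3 : S1.image g ⊆ (D.filter (fun e => ¬ Good e)).erase estar := by
              intro x hx
              obtain ⟨e, he, rfl⟩ := Finset.mem_image.1 hx
              have hge := hgS e (Finset.mem_filter.1 he).1
              exact Finset.mem_erase.2 ⟨hge.2.1, Finset.mem_filter.2 ⟨hge.1.1, hge.1.2⟩⟩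
            rw [h1, ← h2]
            exact Finset.sum_le_sum_of_subset h3
          have hkpos : 1 ≤ uF F estar := uF_pos hFr estar
          have hWpos : 0 < W := by omega
          have hcard2 : S2.card ≤ Fintype.card Q := by
            simpa using Finset.card_le_univ S2
          have hsum2 : ∑ e ∈ S2, W ^ uF F e ≤ Fintype.card Q * W ^ (uF F estar - 1) := by
            have hb : ∀ e ∈ S2, W ^ uF F e ≤ W ^ (uF F estar - 1) := by
              intro e he
              obtain ⟨heS, hneq⟩ := Finset.mem_filter.1 he
              have hge := hgS e heS
              have hle : uF F e ≤ uF F (g e) := uF_le hFt hge.2.2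
              have hlt : uF F e < uF F (g e) := lt_of_le_of_ne hle hneq
              have hgle : uF F (g e) ≤ uF F estar :=
                hmax (g e) (Finset.mem_filter.2 ⟨hge.1.1, hge.1.2⟩)
              exact Nat.pow_le_pow_right hWpos (by omega)
            calc ∑ e ∈ S2, W ^ uF F e ≤ S2.card • (W ^ (uF F estar - 1)) :=
                  Finset.sum_le_card_nsmul _ _ _ hb
              _ = S2.card * W ^ (uF F estar - 1) := by simp
              _ ≤ Fintype.card Q * W ^ (uF F estar - 1) :=
                    Nat.mul_le_mul_right _ hcard2
          have hlast : Fintype.card Q * W ^ (uF F estar - 1) < W ^ uF F estar := by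
            have heq : W ^ uF F estar = W * W ^ (uF F estar - 1) := by
              rw [← pow_succ']
              congr 1
              omega
            rw [heq]
            have hwp : 0 < W ^ (uF F estar - 1) := pow_pos hWpos _
            have hclt : Fintype.card Q < W := by omega
            exact Nat.mul_lt_mul_of_lt_of_le hclt (le_refl _) hwp
          have hDsum : ∑ x ∈ (D.filter (fun e => ¬ Good e)).erase estar, W ^ uF F x
              + W ^ uF F estar = muF F Good D :=
            Finset.sum_erase_add _ _ hestar
          calc muF F Good Dnew ≤ ∑ e ∈ S, W ^ uF F e := hstep1
            _ = ∑ e ∈ S1, W ^ uF F e + ∑ e ∈ S2, W ^ uF F e := hsplit.symm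
            _ ≤ (∑ x ∈ (D.filter (fun e => ¬ Good e)).erase estar, W ^ uF F x)
                  + Fintype.card Q * W ^ (uF F estar - 1) := Nat.add_le_add hsum1 hsum2
            _ < (∑ x ∈ (D.filter (fun e => ¬ Good e)).erase estar, W ^ uF F x)
                  + W ^ uF F estar := Nat.add_lt_add_left hlast _
            _ = muF F Good D := hDsum
        exact ihm s' Dnew (hBt hBc hBcs) hDnewδ hstnew (by omega)
/-- The covering property achieved by a subtree rooted at `e`. -/
def GoodT (A : ABA σ Q) (F : Q → Q → Prop) (v : ℕ → σ) (T : Set (List Q)) (p : Q)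
    (extf : List Q → Q) (e : Q) : Prop :=
  ∃ G, IsPartialRun A (shiftw v) G ∧ [e] ∈ G ∧
    ∀ ψ, IsBranch G ψ → ∃ τ, IsBranch T (p :: τ) ∧ List.Forall₂ (αle A) τ ψ ∧
      F (extf (p :: τ)) (lastSt A ψ)

/-- The main claim, proved by induction on the number of nodes: for every partial run
`T` rooted at `p`, extension function `ext`, and state `y` with `F p y`, there is a
partial run rooted at some `r` with `B y r`, all branches of which strongly cover
branches of `T`. -/
lemma claim [Finite σ] [Finite Q] (A : ABA σ Q) (hne : A.NoEmpty)
    (F B M : Q → Q → Prop) (hFr : Reflexive F) (hFt : Transitive F)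
    (hF : ForwardSim A F) (hunamb : Unambiguous A F) (hBr : Reflexive B)
    (hBt : Transitive B) (hB : BackwardSim A F B) (hM : IsMediated F B M) :
    ∀ n : ℕ, ∀ (v : ℕ → σ) (T : Set (List Q)) (p : Q) (extf : List Q → Q),
      IsPartialRun A v T → [p] ∈ T → IsExtFun A M T extf → T.ncard ≤ n →
      ∀ y, F p y →
      ∃ U r, IsPartialRun A v U ∧ [r] ∈ U ∧ B y r ∧
        ∀ ψ, IsBranch U ψ → ∃ π, IsBranch T π ∧ List.Forall₂ (αle A) π ψ ∧
          F (extf π) (lastSt A ψ) := by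
  intro n
  induction n with
  | zero =>
      intro v T p extf hT hp _ hcard y _
      exfalso
      have := (Set.ncard_pos hT.finite).2 ⟨_, hp⟩
      omega
  | succ n IH =>
      intro v T p extf hT hp hext hcard y hpy
      rcases hT.step [p] hp with h0 | htr
      · -- the root is a leaf: use forward extensibility and the mediator
        have hbr : IsBranch T [p] := ⟨hp, h0⟩
        have hm : M (extf [p]) p := hext [p] hbr
        have hm2 : M (extf [p]) y := hM.fwd_ext _ _ _ hm hpy
        obtain ⟨s, hFs, hBys⟩ := hM.mediator _ _ hm2
        obtain ⟨hrun, hsbr, huniq⟩ := singleton_run A v s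
        refine ⟨{[s]}, s, hrun, rfl, hBys, ?_⟩
        intro ψ hψ
        rw [huniq _ hψ]
        have hαps : αle A p s := fun h => (hB y s hBys).2.1 ((hF p y hpy).1 h)
        exact ⟨[p], hbr, List.Forall₂.cons hαps List.Forall₂.nil, hFs⟩
      · classical
        haveI := Fintype.ofFinite Q
        have hP : succs T [p] ∈ A.δ p (v 0) := by simpa [lastSt] using htr
        -- any unhandled state can be handled, through the induction hypothesis
        have hhandle : ∀ e, (∃ x ∈ succs T [p], F x e) →
            ∃ z, B e z ∧ GoodT A F v T p extf z := by
          rintro e ⟨x, hxP, hxe⟩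
          obtain ⟨hcrun, hcmem⟩ := childT_run hT hp hxP
          have hcext : IsExtFun A M (childT p x T) (fun τ => extf (p :: τ)) := by
            intro τ hτ
            have hbτ := childT_branch hτ
            have h1 := hext _ hbτ
            have hτne : τ ≠ [] := by obtain ⟨l', rfl⟩ := hτ.1.1; simp
            rwa [lastSt_cons _ _ hτne] at h1
          have hlt : (childT p x T).ncard < T.ncard := childT_ncard_lt hT.finite hp
          obtain ⟨U0, r0, hU0run, hr0, hBer0, hcov0⟩ :=
            IH (shiftw v) (childT p x T) x (fun τ => extf (p :: τ)) hcrun hcmem hcext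
              (by omega) e hxe
          refine ⟨r0, hBer0, U0, hU0run, hr0, ?_⟩
          intro ψ hψ
          obtain ⟨τ, hτbr, hτα, hτF⟩ := hcov0 ψ hψ
          exact ⟨τ, childT_branch hτbr, hτα, hτF⟩
        -- Goodness is preserved by forward-simulation lifting
        have hliftG : ∀ a b, GoodT A F v T p extf a → F a b → GoodT A F v T p extf b := by
          rintro a b ⟨G, hGrun, haG, hGcov⟩ hab
          obtain ⟨G', hG'run, hbG', hG'cov⟩ :=
            lift A hne F hF G.ncard (shiftw v) G a b hGrun haG le_rfl hab
          refine ⟨G', hG'run, hbG', ?_⟩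
          intro ψ hψ
          obtain ⟨η, hηbr, hηF⟩ := hG'cov ψ hψ
          obtain ⟨τ, hτbr, hτα, hτF⟩ := hGcov η hηbr
          have hηne : η ≠ [] := tree_ne_nil hGrun.tree hηbr.1
          refine ⟨τ, hτbr, ?_, ?_⟩
          · exact forall₂_comp (R := αle A) (S := F) (U' := αle A) (fun x1 x2 x3 h12 h23 hα => (hF x2 x3 h23).1 (h12 hα)) hτα hηF
          · exact hFt hτF (forall₂_lastSt A hηF hηne)
        -- the initial transition from y, via forward simulation
        obtain ⟨R0, hR0, hcovR0⟩ := (hF p y hpy).2 (v 0) _ hP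
        have hR0fin : R0.Finite := Set.toFinite R0
        obtain ⟨c', D', hByc', hD'δ, hGoodAll⟩ :=
          inner A F B hFr hFt hunamb hBt hB (v 0) (GoodT A F v T p extf)
            (succs T [p]) y hhandle hliftG
            (muF F (GoodT A F v T p extf) hR0fin.toFinset) y hR0fin.toFinset (hBr y)
            (by rw [hR0fin.coe_toFinset]; exact hR0)
            (fun e he => Or.inr (by
              obtain ⟨q, hq, hqF⟩ := hcovR0 e (by rwa [← hR0fin.mem_toFinset])
              exact ⟨q, hq, hqF⟩)) le_rfl
        -- choose the covering subtrees and assemble the final tree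
        have hfam : ∀ e : Q, ∃ G, e ∈ D' → IsPartialRun A (shiftw v) G ∧ [e] ∈ G ∧
            ∀ ψ, IsBranch G ψ → ∃ τ, IsBranch T (p :: τ) ∧ List.Forall₂ (αle A) τ ψ ∧
              F (extf (p :: τ)) (lastSt A ψ) := by
          intro e
          by_cases he : e ∈ D'
          · obtain ⟨G, h1, h2, h3⟩ := hGoodAll e he
            exact ⟨G, fun _ => ⟨h1, h2, h3⟩⟩
          · exact ⟨∅, fun h => absurd h he⟩
        choose fam hfams using hfam
        obtain ⟨U, hUrun, hcU, hUbr⟩ := assemble A hne v c' ↑D' hD'δ fam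
          (fun e he => ⟨(hfams e (Finset.mem_coe.1 he)).1,
            (hfams e (Finset.mem_coe.1 he)).2.1⟩)
        refine ⟨U, c', hUrun, hcU, hByc', ?_⟩
        intro ψ hψ
        obtain ⟨e, he, l, rfl, hlbr⟩ := hUbr ψ hψ
        have he' : e ∈ D' := Finset.mem_coe.1 he
        obtain ⟨τ, hτbr, hτα, hτF⟩ := (hfams e he').2.2 l hlbr
        have hlne : l ≠ [] := tree_ne_nil (hfams e he').1.tree hlbr.1
        have hαpc : αle A p c' := fun h => (hB y c' hByc').2.1 ((hF p y hpy).1 h)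
        refine ⟨p :: τ, hτbr, List.Forall₂.cons hαpc hτα, ?_⟩
        rw [lastSt_cons _ _ hlne]
        exact hτF

end Stmt13Aux

/-- For every partial run `T` of `A` on `w` with an extension function `ext`, there is a
partial run `U` of `A` on `w` that strongly covers `T` w.r.t. `ext`:
`root(T) ≼_B root(U)` and every branch `ψ` of `U` satisfies `π ≼_α ψ` and
`ext(π) ≼_F leaf(ψ)` for some branch `π` of `T`. -/
theorem stmt_13 [Finite σ] [Finite Q] (A : ABA σ Q) (hne : A.NoEmpty)
    (F B M : Q → Q → Prop)
    (hFr : Reflexive F) (hFt : Transitive F) (hF : ForwardSim A F)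
    (hunamb : Unambiguous A F)
    (hBr : Reflexive B) (hBt : Transitive B) (hB : BackwardSim A F B)
    (hM : IsMediated F B M)
    (w : ℕ → σ) (T : Set (List Q)) (hT : IsPartialRun A w T)
    (ext : List Q → Q) (hext : IsExtFun A M T ext) :
    ∃ U : Set (List Q), IsPartialRun A w U ∧ TrExt A F B ext T U := by
  classical
  obtain ⟨p, hp, hpu⟩ := hT.tree.root
  obtain ⟨U, r, hUrun, hrU, hBpr, hcov⟩ :=
    Stmt13Aux.claim A hne F B M hFr hFt hF hunamb hBr hBt hB hM T.ncard w T p ext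
      hT hp hext le_rfl p (hFr p)
  refine ⟨U, hUrun, ?_, ?_⟩
  · intro ψ hψ
    obtain ⟨π, hπ, hα, hFl⟩ := hcov ψ hψ
    exact ⟨π, hπ, hα, hFl⟩
  · intro p' r' hp' hr'
    obtain ⟨rt, hrt, hrtu⟩ := hUrun.tree.root
    have h1 : p' = p := hpu p' hp'
    have h2 : r' = r := (hrtu r' hr').trans (hrtu r hrU).symm
    rw [h1, h2]
    exact hBpr
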